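/- Let N ≥ 1 and K ≥ 1 be integers, define the base down-chirp s_d[n] = exp( −2πi·( n²/(2NK²) − n/(2K) ) ) for n = 0,…,NK−1, let Δf be a real number, and let m be an integer with 0 ≤ m ≤ NK−1 such that sin( π·(Δf − m/(NK²)) ) ≠ 0. Then the CFO-affected cross-correlation magnitude satisfies (1/(NK)) · | Σ_{n=0}^{NK−m−1} conj(s_d[n]) · s_d[n+m] · exp( 2πi·Δf·(n+m) ) | = (1/(NK)) · | sin( π·(NK − m)·(Δf − m/(NK²)) ) / sin( π·(Δf − m/(NK²)) ) |. -/

import Mathlib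

open Real Complex Finset

/-- The base down-chirp with chip number `N`, oversampling factor `K`, and `NK` samples:
`s_d[n] = exp(-2πi (n²/(2NK²) - n/(2K)))`. -/
noncomputable def baseDownChirp (N K n : ℕ) : ℂ :=
  Complex.exp (-(2 * Real.pi * Complex.I) *
    ((n : ℂ) ^ 2 / (2 * (N : ℂ) * (K : ℂ) ^ 2) - (n : ℂ) / (2 * (K : ℂ))))

lemma abs_exp_two_pi_sub_one (x : ℝ) :
    ‖Complex.exp (2 * Real.pi * Complex.I * (x : ℂ)) - 1‖
      = 2 * |Real.sin (Real.pi * x)| := by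
  have key : ∀ a : ℂ, 2 * ((Complex.exp (-a * Complex.I) - Complex.exp (a * Complex.I))
      * Complex.I / 2) * Complex.I
      = Complex.exp (a * Complex.I) - Complex.exp (-a * Complex.I) := by
    intro a
    linear_combination (Complex.exp (-a * Complex.I) - Complex.exp (a * Complex.I)) * Complex.I_sq
  have h : Complex.exp (2 * Real.pi * Complex.I * (x : ℂ)) - 1
      = Complex.exp ((Real.pi * x : ℝ) * Complex.I) *
        (2 * ((Real.sin (Real.pi * x) : ℝ) : ℂ) * Complex.I) := by
    rw [Complex.ofReal_sin, Complex.sin]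
    rw [show (2 : ℂ) * ((Complex.exp (-↑(Real.pi * x) * Complex.I) -
        Complex.exp (↑(Real.pi * x) * Complex.I)) * Complex.I / 2) * Complex.I =
        Complex.exp (↑(Real.pi * x) * Complex.I) -
        Complex.exp (-↑(Real.pi * x) * Complex.I) by
      rw [← key ((Real.pi * x : ℝ) : ℂ)]]
    rw [mul_sub, ← Complex.exp_add, ← Complex.exp_add]
    push_cast
    ring_nf
    rw [Complex.exp_zero]
    ring
  rw [h, norm_mul, norm_mul, norm_mul, Complex.norm_exp_ofReal_mul_I, Complex.norm_I,
    Complex.norm_two, Complex.norm_real, Real.norm_eq_abs]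
  ring

/-- CFO-affected cross-correlation magnitude of the base down-chirp at lag `m`
(timing–frequency coupling): for a normalized CFO `Δf` with
`sin(π(Δf - m/(NK²))) ≠ 0` and `0 ≤ m ≤ NK - 1`,
`(1/(NK)) |Σ_{n=0}^{NK-m-1} conj(s_d[n]) s_d[n+m] e^{2πi Δf (n+m)}|
  = (1/(NK)) |sin(π(NK-m)(Δf - m/(NK²))) / sin(π(Δf - m/(NK²)))|`. -/
theorem downchirp_crosscorrelation_cfo (N K : ℕ) (hN : 1 ≤ N) (hK : 1 ≤ K)
    (Δf : ℝ) (m : ℕ) (hm : m ≤ N * K - 1)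
    (hsin : Real.sin (Real.pi * (Δf - m / ((N : ℝ) * K ^ 2))) ≠ 0) :
    (1 / ((N : ℝ) * K)) *
      ‖∑ n ∈ Finset.range (N * K - m),
        (starRingEnd ℂ) (baseDownChirp N K n) * baseDownChirp N K (n + m) *
          Complex.exp (2 * Real.pi * Complex.I * (Δf : ℂ) * ((n : ℂ) + (m : ℂ)))‖ =
    (1 / ((N : ℝ) * K)) *
      |Real.sin (Real.pi * ((N : ℝ) * K - m) * (Δf - m / ((N : ℝ) * K ^ 2))) /
        Real.sin (Real.pi * (Δf - m / ((N : ℝ) * K ^ 2)))| := by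
  have hN0 : (N : ℂ) ≠ 0 := Nat.cast_ne_zero.mpr (by omega)
  have hK0 : (K : ℂ) ≠ 0 := Nat.cast_ne_zero.mpr (by omega)
  have hNK0 : (N : ℂ) * (K : ℂ) ^ 2 ≠ 0 := mul_ne_zero hN0 (pow_ne_zero _ hK0)
  set θ : ℝ := Δf - m / ((N : ℝ) * K ^ 2) with hθ
  set C : ℝ := Δf * m - m ^ 2 / (2 * N * K ^ 2) + m / (2 * K) with hC
  set z : ℂ := Complex.exp (2 * Real.pi * Complex.I * (θ : ℂ)) with hzdef
  have hterm : ∀ n : ℕ,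
      (starRingEnd ℂ) (baseDownChirp N K n) * baseDownChirp N K (n + m) *
        Complex.exp (2 * Real.pi * Complex.I * (Δf : ℂ) * ((n : ℂ) + (m : ℂ)))
      = Complex.exp (2 * Real.pi * Complex.I * (C : ℂ)) * z ^ n := by
    intro n
    rw [hzdef, hC, hθ]
    unfold baseDownChirp
    rw [← Complex.exp_conj, ← Complex.exp_nat_mul, ← Complex.exp_add, ← Complex.exp_add,
      ← Complex.exp_add]
    congr 1
    simp only [map_mul, map_neg, map_sub, map_div₀, map_pow, map_ofNat, Complex.conj_I,
      Complex.conj_ofReal, Complex.conj_natCast]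
    push_cast
    ring
  rw [Finset.sum_congr rfl (fun n _ => hterm n), ← Finset.mul_sum]
  have habs_z : ‖z - 1‖ = 2 * |Real.sin (Real.pi * θ)| := by
    rw [hzdef]; exact abs_exp_two_pi_sub_one θ
  have hz1 : z ≠ 1 := by
    intro h
    apply hsin
    have : ‖z - 1‖ = 0 := by simp [h]
    rw [habs_z] at this
    have := abs_eq_zero.mp (by linarith [abs_nonneg (Real.sin (Real.pi * θ))] : |Real.sin (Real.pi * θ)| = 0)
    exact this
  rw [geom_sum_eq hz1]
  have hLcast : ((N * K - m : ℕ) : ℝ) = (N : ℝ) * K - m := by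
    have h1 : m ≤ N * K := le_trans hm (Nat.sub_le _ _)
    push_cast [h1]
    ring
  have hzL : z ^ (N * K - m) = Complex.exp (2 * Real.pi * Complex.I *
      ((((N * K - m : ℕ) : ℝ) * θ : ℝ) : ℂ)) := by
    rw [hzdef, ← Complex.exp_nat_mul]
    congr 1
    push_cast
    ring
  rw [norm_mul, norm_div, hzL, abs_exp_two_pi_sub_one, habs_z]
  have hec : ‖Complex.exp (2 * Real.pi * Complex.I * (C : ℂ))‖ = 1 := by
    rw [show (2 * (Real.pi : ℂ) * Complex.I * (C : ℂ)) = ((2 * Real.pi * C : ℝ) : ℂ) * Complex.I by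
      push_cast; ring, Complex.norm_exp_ofReal_mul_I]
  rw [hec, one_mul, abs_div]
  have h2 : (2:ℝ) * |Real.sin (Real.pi * (((N * K - m : ℕ) : ℝ) * θ))| /
      (2 * |Real.sin (Real.pi * θ)|) = |Real.sin (Real.pi * (((N * K - m : ℕ) : ℝ) * θ))| /
      |Real.sin (Real.pi * θ)| := by
    rw [mul_div_mul_left _ _ (two_ne_zero)]
  rw [h2, hLcast]
  ring_nf
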